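/- Let m, n ∈ ℤ, set β = m√−d + n, and assume the ideal βO_K is coprime to D·O_K. Then: (i) if m ≡ 0 (mod 4) and n > 0, then ε(β) = (−D/n); (ii) if m ≡ 2 (mod 4) and n > 0, then ε(β) = −(−D/n); (iii) if n ≡ 0 (mod 4) and m > 0, then ε(β) = i·(−1)^{(m−1)/2}·(n/d); (iv) if n ≡ 2 (mod 4) and m > 0, then ε(β) = −i·(−1)^{(m−1)/2}·(n/d). Here (−D/n) and (n/d) denote Jacobi symbols (in cases (i),(ii) n is odd and positive; in cases (iii),(iv) m is odd and positive and d is odd). -/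

import Mathlib

open NumberField FractionalIdeal
open scoped nonZeroDivisors

noncomputable section

variable {K : Type*} [Field K] [NumberField K]

/-- The group `I(f)` of invertible fractional ideals of `K` coprime to the modulus `f`:
`a ∈ I(f)` iff `a = b * c⁻¹` with `b, c` integral ideals coprime to `f`. -/
def coprimeIdeals (f : Ideal (𝓞 K)) : Subgroup (FractionalIdeal (𝓞 K)⁰ K)ˣ where
  carrier := {a | ∃ b c : Ideal (𝓞 K), IsCoprime b f ∧ IsCoprime c f ∧
    (a : FractionalIdeal (𝓞 K)⁰ K) * (c : FractionalIdeal (𝓞 K)⁰ K) =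
      (b : FractionalIdeal (𝓞 K)⁰ K)}
  one_mem' := ⟨1, 1, isCoprime_one_left, isCoprime_one_left, by simp⟩
  mul_mem' := by
    rintro a a' ⟨b, c, hb, hc, h⟩ ⟨b', c', hb', hc', h'⟩
    refine ⟨b * b', c * c', hb.mul_left hb', hc.mul_left hc', ?_⟩
    rw [coeIdeal_mul, coeIdeal_mul, Units.val_mul, mul_mul_mul_comm, h, h']
  inv_mem' := by
    rintro a ⟨b, c, hb, hc, h⟩
    refine ⟨c, b, hc, hb, ?_⟩
    have h1 : ((a⁻¹ : (FractionalIdeal (𝓞 K)⁰ K)ˣ) : FractionalIdeal (𝓞 K)⁰ K) * a = 1 := by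
      rw [← Units.val_mul, inv_mul_cancel, Units.val_one]
    calc ((a⁻¹ : (FractionalIdeal (𝓞 K)⁰ K)ˣ) : FractionalIdeal (𝓞 K)⁰ K) * b
        = ((a⁻¹ : (FractionalIdeal (𝓞 K)⁰ K)ˣ) : FractionalIdeal (𝓞 K)⁰ K) *
          ((a : FractionalIdeal (𝓞 K)⁰ K) * c) := by rw [h]
      _ = c := by rw [← mul_assoc, h1, one_mul]

/-- `χ : I(f) → ℂˣ` is a Hecke character of `K` of type `ε` modulo `f`, i.e.
`χ(αO_K) = ε(α)·α` for every `α = β/γ ∈ K^×` coprime to `f`. -/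
def IsHeckeChar [Algebra K ℂ] {f : Ideal (𝓞 K)} (ε : ((𝓞 K) ⧸ f)ˣ →* ℂˣ)
    (χ : coprimeIdeals f →* ℂˣ) : Prop :=
  ∀ β γ : 𝓞 K, IsCoprime (Ideal.span {β}) f → IsCoprime (Ideal.span {γ}) f →
  ∀ u v : ((𝓞 K) ⧸ f)ˣ, (u : (𝓞 K) ⧸ f) = Ideal.Quotient.mk f β →
    (v : (𝓞 K) ⧸ f) = Ideal.Quotient.mk f γ →
  ∀ a : coprimeIdeals f,
    ((a : (FractionalIdeal (𝓞 K)⁰ K)ˣ) : FractionalIdeal (𝓞 K)⁰ K) =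
      spanSingleton (𝓞 K)⁰ (algebraMap (𝓞 K) K β / algebraMap (𝓞 K) K γ) →
    (χ a : ℂ) = (ε u : ℂ) * ((ε v : ℂ))⁻¹ *
      algebraMap K ℂ (algebraMap (𝓞 K) K β / algebraMap (𝓞 K) K γ)

/-- `K(χ)`: the subfield of `ℂ` generated over `K` by the values of `χ`. -/
def heckeField [Algebra K ℂ] {f : Ideal (𝓞 K)} (χ : coprimeIdeals f →* ℂˣ) :
    IntermediateField K ℂ :=
  IntermediateField.adjoin K (Set.range fun a : coprimeIdeals f => ((χ a : ℂˣ) : ℂ))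

/-- `P(f)`: the subgroup of `I(f)` consisting of principal fractional ideals. -/
def principalCoprime (f : Ideal (𝓞 K)) : Subgroup ↥(coprimeIdeals f) :=
  Subgroup.comap (coprimeIdeals f).subtype (toPrincipalIdeal (𝓞 K) K).range

/-- `H(f) = {a ∈ I(f) : a² ∈ P(f)}`. -/
def genusSet (f : Ideal (𝓞 K)) : Set ↥(coprimeIdeals f) :=
  {a | a ^ 2 ∈ principalCoprime f}

/-- `T_g`: the subfield of `ℂ` generated over `K` by the values `χ(a)`, `a ∈ H(f)`. -/
def genusField [Algebra K ℂ] {f : Ideal (𝓞 K)} (χ : coprimeIdeals f →* ℂˣ) :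
    IntermediateField K ℂ :=
  IntermediateField.adjoin K ((fun a => ((χ a : ℂˣ) : ℂ)) '' genusSet f)

/-- `L`: the subfield of `ℂ` generated over `K` by the values of `ε`. -/
def epsField [Algebra K ℂ] {f : Ideal (𝓞 K)} (ε : ((𝓞 K) ⧸ f)ˣ →* ℂˣ) :
    IntermediateField K ℂ :=
  IntermediateField.adjoin K (Set.range fun u => ((ε u : ℂˣ) : ℂ))

lemma chi_mem_heckeField [Algebra K ℂ] {f : Ideal (𝓞 K)} (χ : coprimeIdeals f →* ℂˣ)
    (a : coprimeIdeals f) : ((χ a : ℂˣ) : ℂ) ∈ heckeField χ :=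
  IntermediateField.subset_adjoin K _ ⟨a, rfl⟩

/-- `ξ` is a generator of `μ₂(ε)`, the group of elements of 2-power order
in the image of `ε`. -/
def IsMu2Gen {f : Ideal (𝓞 K)} (ε : ((𝓞 K) ⧸ f)ˣ →* ℂˣ) (ξ : ℂˣ) : Prop :=
  (∃ u, ε u = ξ) ∧ (∃ k : ℕ, ξ ^ 2 ^ k = 1) ∧
  ∀ ζ : ℂˣ, (∃ u, ε u = ζ) → (∃ k : ℕ, ζ ^ 2 ^ k = 1) → ∃ m : ℕ, ζ = ξ ^ m

/-- Condition (3.6) on `ε`. -/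
def Cond36 (D : ℕ) {f : Ideal (𝓞 K)} (ε : ((𝓞 K) ⧸ f)ˣ →* ℂˣ) : Prop :=
  (∀ u, (ε u) ^ 12 = 1) ∧ (¬ 3 ∣ D → ∀ u, (ε u) ^ 4 = 1) ∧
    (¬ 2 ∣ D → ∀ u, (ε u) ^ 6 = 1) ∧ (Nat.gcd 6 D = 1 → ∀ u, (ε u) ^ 2 = 1)

end

/-- The values of `ε` on `β = m√−d + n` coprime to `D·O_K`. -/
theorem eps_value_on_m_sqrt_add_n
    (D d : ℕ) (hD : 4 < D) (hd : d = D / 4) (h4 : 4 ∣ D) (h8 : ¬ 8 ∣ D)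
    (K : Type) [Field K] [NumberField K] [Algebra K ℂ]
    (hdeg : Module.finrank ℚ K = 2)
    (hdisc : NumberField.discr K = -(D : ℤ))
    (w : 𝓞 K) (hw : w ^ 2 = -(d : 𝓞 K))
    (hwim : 0 < (algebraMap K ℂ (algebraMap (𝓞 K) K w)).im)
    (hgen : Algebra.adjoin ℤ {w} = ⊤)
    (p2 : Ideal (𝓞 K)) (hp2 : p2 = Ideal.span {2, 1 + w})
    (f : Ideal (𝓞 K)) (hf : f = p2 ^ 3 * Ideal.span {w})
    (ε : ((𝓞 K) ⧸ f)ˣ →* ℂˣ)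
    (hε : ∀ (u : ((𝓞 K) ⧸ f)ˣ) (β : 𝓞 K) (j : ℕ) (n : ℤ),
      (u : (𝓞 K) ⧸ f) = Ideal.Quotient.mk f β →
      β - w ^ j ∈ p2 ^ 3 → β - (n : 𝓞 K) ∈ Ideal.span {w} →
      ((ε u : ℂˣ) : ℂ) = Complex.I ^ j * ((jacobiSym n d : ℤ) : ℂ)) :
    ∀ m n : ℤ, ∀ u : ((𝓞 K) ⧸ f)ˣ,
      IsCoprime (Ideal.span {((m : 𝓞 K) * w + (n : 𝓞 K))}) (Ideal.span {(D : 𝓞 K)}) →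
      (u : (𝓞 K) ⧸ f) = Ideal.Quotient.mk f ((m : 𝓞 K) * w + (n : 𝓞 K)) →
      ((m % 4 = 0 → 0 < n →
          ((ε u : ℂˣ) : ℂ) = ((jacobiSym (-(D : ℤ)) n.toNat : ℤ) : ℂ)) ∧
        (m % 4 = 2 → 0 < n →
          ((ε u : ℂˣ) : ℂ) = -((jacobiSym (-(D : ℤ)) n.toNat : ℤ) : ℂ)) ∧
        (n % 4 = 0 → 0 < m →
          ((ε u : ℂˣ) : ℂ) =
            Complex.I * (-1 : ℂ) ^ ((m - 1) / 2) * ((jacobiSym n d : ℤ) : ℂ)) ∧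
        (n % 4 = 2 → 0 < m →
          ((ε u : ℂˣ) : ℂ) =
            -(Complex.I * (-1 : ℂ) ^ ((m - 1) / 2) * ((jacobiSym n d : ℤ) : ℂ)))) := by
  intro m n u hcop hu
  have hD4 : D = 4 * d := by omega
  have hdodd : d % 2 = 1 := by omega
  -- linear independence of 1, w over ℤ (via the complex embedding)
  have indep : ∀ a b : ℤ, (a : K) + (b : K) * (algebraMap (𝓞 K) K w) = 0 →
      a = 0 ∧ b = 0 := by
    intro a b hab
    have h2 : (a : ℂ) + (b : ℂ) * (algebraMap K ℂ (algebraMap (𝓞 K) K w)) = 0 := by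
      have := congrArg (algebraMap K ℂ) hab
      simpa [_root_.map_add, _root_.map_mul, map_intCast] using this
    have him := congrArg Complex.im h2
    simp [Complex.add_im, Complex.mul_im] at him
    have hb : b = 0 := by
      rcases him with h | h
      · exact_mod_cast h
      · exact absurd h (ne_of_gt hwim)
    subst hb
    refine ⟨?_, rfl⟩
    have : (a : ℂ) = 0 := by simpa using h2
    exact_mod_cast this
  -- every element of 𝓞 K has the form a + b w
  have form : ∀ y : 𝓞 K, ∃ a b : ℤ, y = (a : 𝓞 K) + (b : 𝓞 K) * w := by
    intro y
    have hy : y ∈ Algebra.adjoin ℤ ({w} : Set (𝓞 K)) := by rw [hgen]; trivial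
    induction hy using Algebra.adjoin_induction with
    | mem x hx =>
      rw [Set.mem_singleton_iff] at hx
      exact ⟨0, 1, by rw [hx]; push_cast; ring⟩
    | algebraMap r => exact ⟨r, 0, by simp⟩
    | add x y _ _ ihx ihy =>
      obtain ⟨a, b, rfl⟩ := ihx
      obtain ⟨a', b', rfl⟩ := ihy
      exact ⟨a + a', b + b', by push_cast; ring⟩
    | mul x y _ _ ihx ihy =>
      obtain ⟨a, b, rfl⟩ := ihx
      obtain ⟨a', b', rfl⟩ := ihy
      refine ⟨a * a' - b * b' * (d : ℤ), a * b' + b * a', ?_⟩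
      push_cast
      linear_combination ((b : 𝓞 K) * (b' : 𝓞 K)) * hw
  -- 2 is not a unit
  have hno2 : ¬ IsUnit (2 : 𝓞 K) := by
    intro h
    obtain ⟨v, hv⟩ := h.exists_right_inv
    obtain ⟨a, b, rfl⟩ := form v
    have h0 : ((2 * a - 1 : ℤ) : 𝓞 K) + ((2 * b : ℤ) : 𝓞 K) * w = 0 := by
      push_cast
      linear_combination hv
    have h1 : ((2 * a - 1 : ℤ) : K) + ((2 * b : ℤ) : K) * (algebraMap (𝓞 K) K w) = 0 := by
      have := congrArg (algebraMap (𝓞 K) K) h0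
      simpa [_root_.map_add, _root_.map_mul, map_intCast, map_ofNat] using this
    obtain ⟨ha, hb⟩ := indep _ _ h1
    omega
  -- d ≡ 1 mod 4
  have hd4 : d % 4 = 1 := by
    rcases (by omega : d % 4 = 1 ∨ d % 4 = 3) with h | h
    · exact h
    exfalso
    obtain ⟨c, hc⟩ : ∃ c : ℕ, d = 4 * c + 3 := ⟨d / 4, by omega⟩
    set z : K := (1 + algebraMap (𝓞 K) K w) / 2 with hzdef
    have hwK : (algebraMap (𝓞 K) K w) ^ 2 = -(d : K) := by
      have := congrArg (algebraMap (𝓞 K) K) hw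
      simpa [_root_.map_pow, _root_.map_neg, map_natCast] using this
    have hdK : ((d : ℕ) : K) = 4 * (c : K) + 3 := by rw [hc]; push_cast; ring
    have hzInt : IsIntegral ℤ z := by
      refine ⟨Polynomial.X ^ 2 + (Polynomial.C (-1) * Polynomial.X + Polynomial.C ((c : ℤ) + 1)),
        Polynomial.monic_X_pow_add ?_, ?_⟩
      · exact_mod_cast Polynomial.degree_linear_lt
      · have hgoal : z ^ 2 + (-z + ((c : K) + 1)) = 0 := by
          have key : z ^ 2 + (-z + ((c : K) + 1)) =
              ((algebraMap (𝓞 K) K w) ^ 2 + ((d : ℕ) : K)) / 4 := by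
            rw [hdK, hzdef]; push_cast; ring
          rw [key, hwK]; ring
        simpa [Polynomial.eval₂_add, Polynomial.eval₂_mul, Polynomial.eval₂_pow,
          Polynomial.eval₂_X, Polynomial.eval₂_C, eq_intCast] using hgoal
    have hyform := form ⟨z, hzInt⟩
    obtain ⟨a, b, hy⟩ := hyform
    have hy2 : z = (a : K) + (b : K) * (algebraMap (𝓞 K) K w) := by
      have := congrArg (algebraMap (𝓞 K) K) hy
      rw [show algebraMap (𝓞 K) K ⟨z, hzInt⟩ = z from rfl] at this
      simpa [_root_.map_add, _root_.map_mul, map_intCast] using this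
    have h0 : ((2 * a - 1 : ℤ) : K) + ((2 * b - 1 : ℤ) : K) * (algebraMap (𝓞 K) K w) = 0 := by
      rw [hzdef] at hy2
      push_cast
      field_simp at hy2
      linear_combination -hy2
    obtain ⟨ha, hb⟩ := indep _ _ h0
    omega
  obtain ⟨e, he⟩ : ∃ e : ℕ, d = 4 * e + 1 := ⟨d / 4, by omega⟩
  have hd' : ((d : ℕ) : 𝓞 K) = 4 * (e : 𝓞 K) + 1 := by rw [he]; push_cast; ring
  -- ideal membership facts
  have h2p : (2 : 𝓞 K) ∈ p2 := by
    rw [hp2]; exact Ideal.subset_span (by simp)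
  have h1wp : (1 + w : 𝓞 K) ∈ p2 := by
    rw [hp2]; exact Ideal.subset_span (by simp)
  have hcube : ∀ x y z : 𝓞 K, x ∈ p2 → y ∈ p2 → z ∈ p2 → x * y * z ∈ p2 ^ 3 := by
    intro x y z hx hy hz
    have h3 : p2 ^ 3 = p2 * p2 * p2 := by ring
    rw [h3]
    exact Ideal.mul_mem_mul (Ideal.mul_mem_mul hx hy) hz
  have h2w : (2 : 𝓞 K) + 2 * w ∈ p2 ^ 3 := by
    have key : (2 : 𝓞 K) + 2 * w =
        2 * 2 * 2 * (1 + 2 * (e : 𝓞 K)) + 2 * 2 * (1 + w) * ((e : 𝓞 K) - 1) +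
          2 * (1 + w) * (1 + w) + (1 + w) * (1 + w) * (1 + w) := by
      linear_combination (-(5 + w)) * hw + (5 + w) * hd'
    rw [key]
    exact Ideal.add_mem _ (Ideal.add_mem _ (Ideal.add_mem _
      (Ideal.mul_mem_right _ _ (hcube 2 2 2 h2p h2p h2p))
      (Ideal.mul_mem_right _ _ (hcube 2 2 (1 + w) h2p h2p h1wp)))
      (hcube 2 (1 + w) (1 + w) h2p h1wp h1wp))
      (hcube (1 + w) (1 + w) (1 + w) h1wp h1wp h1wp)
  have h4p : (4 : 𝓞 K) ∈ p2 ^ 3 := by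
    have key : (4 : 𝓞 K) = ((2 : 𝓞 K) + 2 * w) * (1 - w) + 2 * 2 * 2 * (-(e : 𝓞 K)) := by
      linear_combination 2 * hw - 2 * hd'
    rw [key]
    exact Ideal.add_mem _ (Ideal.mul_mem_right _ _ h2w)
      (Ideal.mul_mem_right _ _ (hcube 2 2 2 h2p h2p h2p))
  have hmem4 : ∀ x : 𝓞 K, 4 * x ∈ p2 ^ 3 := fun x => Ideal.mul_mem_right x _ h4p
  -- β - n ∈ (w)
  have hspanw : ((m : 𝓞 K) * w + (n : 𝓞 K)) - ((n : ℤ) : 𝓞 K) ∈ Ideal.span {w} := by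
    have hEq : ((m : 𝓞 K) * w + (n : 𝓞 K)) - ((n : ℤ) : 𝓞 K) = w * (m : 𝓞 K) := by ring
    rw [hEq]
    exact Ideal.mem_span_singleton.mpr ⟨_, rfl⟩
  -- m and n are not both even
  have hpar : ¬ (m % 2 = 0 ∧ n % 2 = 0) := by
    rintro ⟨hm2, hn2⟩
    apply hno2
    rw [← Ideal.span_singleton_eq_top]
    obtain ⟨m₁, hm₁⟩ : ∃ m₁, m = 2 * m₁ := ⟨m / 2, by omega⟩
    obtain ⟨n₁, hn₁⟩ : ∃ n₁, n = 2 * n₁ := ⟨n / 2, by omega⟩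
    have hβ : Ideal.span {((m : 𝓞 K) * w + (n : 𝓞 K))} ≤ Ideal.span {(2 : 𝓞 K)} := by
      rw [Ideal.span_singleton_le_span_singleton]
      exact ⟨(m₁ : 𝓞 K) * w + (n₁ : 𝓞 K), by rw [hm₁, hn₁]; push_cast; ring⟩
    have hDle : Ideal.span {(D : 𝓞 K)} ≤ Ideal.span {(2 : 𝓞 K)} := by
      rw [Ideal.span_singleton_le_span_singleton]
      exact ⟨2 * (d : 𝓞 K), by rw [hD4]; push_cast; ring⟩
    have hsup := Ideal.isCoprime_iff_sup_eq.mp hcop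
    have := sup_le hβ hDle
    rw [hsup] at this
    exact top_le_iff.mp this
  -- powers of -1
  have hpow1 : ∀ k : ℤ, k % 2 = 0 → (-1 : ℂ) ^ k = 1 := by
    intro k hk
    obtain ⟨t, rfl⟩ : ∃ t, k = 2 * t := ⟨k / 2, by omega⟩
    rw [zpow_mul]
    norm_num
  have hpow2 : ∀ k : ℤ, k % 2 = 1 → (-1 : ℂ) ^ k = -1 := by
    intro k hk
    obtain ⟨t, rfl⟩ : ∃ t, k = 2 * t + 1 := ⟨k / 2, by omega⟩
    rw [zpow_add₀ (by norm_num : (-1 : ℂ) ≠ 0), zpow_mul]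
    norm_num
  have hI3 : Complex.I ^ 3 = -Complex.I := by
    simp [pow_succ, Complex.I_mul_I]
  -- jacobi symbol computation for positive odd n
  have hJfact : 0 < n → n % 2 = 1 →
      jacobiSym (-(D : ℤ)) n.toNat = (ZMod.χ₄ (n.toNat : ZMod 4)) * jacobiSym n d := by
    intro hn hnodd
    have hn' : ((n.toNat : ℤ)) = n := Int.toNat_of_nonneg hn.le
    have hoddn' : Odd n.toNat := by rw [Nat.odd_iff]; omega
    have hgcd2 : (2 : ℤ).gcd (n.toNat) = 1 := by
      have h2 : ((2 : ℕ) : ℤ) = 2 := rfl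
      rw [← h2, Int.gcd_natCast_natCast]
      exact Nat.coprime_two_left.mpr hoddn'
    calc jacobiSym (-(D : ℤ)) n.toNat
        = jacobiSym ((-1) * ((2 : ℤ) ^ 2 * (d : ℤ))) n.toNat := by
          congr 1; rw [hD4]; push_cast; ring
      _ = jacobiSym (-1) n.toNat * (jacobiSym ((2 : ℤ) ^ 2) n.toNat *
            jacobiSym (d : ℤ) n.toNat) := by
          rw [jacobiSym.mul_left, jacobiSym.mul_left]
      _ = (ZMod.χ₄ (n.toNat : ZMod 4)) * (1 * jacobiSym ((n.toNat : ℤ)) d) := by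
          rw [jacobiSym.at_neg_one hoddn', jacobiSym.sq_one' hgcd2,
            jacobiSym.quadratic_reciprocity_one_mod_four hd4 hoddn']
      _ = (ZMod.χ₄ (n.toNat : ZMod 4)) * jacobiSym n d := by rw [one_mul, hn']
  refine ⟨?_, ?_, ?_, ?_⟩
  -- case (i)
  · intro hm4 hn
    have hnodd : n % 2 = 1 := by
      rcases Int.emod_two_eq n with h | h
      · exact absurd ⟨by omega, h⟩ hpar
      · exact h
    rcases (by omega : n % 4 = 1 ∨ n % 4 = 3) with hn4 | hn4
    · obtain ⟨m₁, hm₁⟩ : ∃ m₁, m = 4 * m₁ := ⟨m / 4, by omega⟩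
      obtain ⟨n₁, hn₁⟩ : ∃ n₁, n = 4 * n₁ + 1 := ⟨n / 4, by omega⟩
      have cm : (m : 𝓞 K) = 4 * (m₁ : 𝓞 K) := by rw [hm₁]; push_cast; ring
      have cn : (n : 𝓞 K) = 4 * (n₁ : 𝓞 K) + 1 := by rw [hn₁]; push_cast; ring
      have hmem : (m : 𝓞 K) * w + (n : 𝓞 K) - w ^ 0 ∈ p2 ^ 3 := by
        have hEq : (m : 𝓞 K) * w + (n : 𝓞 K) - w ^ 0 =
            4 * ((m₁ : 𝓞 K) * w + (n₁ : 𝓞 K)) := by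
          linear_combination w * cm + cn
        rw [hEq]; exact hmem4 _
      have hval := hε u _ 0 n hu hmem hspanw
      have hJ : jacobiSym (-(D : ℤ)) n.toNat = jacobiSym n d := by
        rw [hJfact hn hnodd, ZMod.χ₄_nat_one_mod_four (by omega), one_mul]
      rw [hval, hJ]
      simp
    · obtain ⟨m₁, hm₁⟩ : ∃ m₁, m = 4 * m₁ := ⟨m / 4, by omega⟩
      obtain ⟨n₁, hn₁⟩ : ∃ n₁, n = 4 * n₁ + 3 := ⟨n / 4, by omega⟩
      have cm : (m : 𝓞 K) = 4 * (m₁ : 𝓞 K) := by rw [hm₁]; push_cast; ring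
      have cn : (n : 𝓞 K) = 4 * (n₁ : 𝓞 K) + 3 := by rw [hn₁]; push_cast; ring
      have hmem : (m : 𝓞 K) * w + (n : 𝓞 K) - w ^ 2 ∈ p2 ^ 3 := by
        have hEq : (m : 𝓞 K) * w + (n : 𝓞 K) - w ^ 2 =
            4 * ((m₁ : 𝓞 K) * w + ((n₁ : 𝓞 K) + (e : 𝓞 K) + 1)) := by
          linear_combination w * cm + cn + hd' - hw
        rw [hEq]; exact hmem4 _
      have hval := hε u _ 2 n hu hmem hspanw
      have hJ : jacobiSym (-(D : ℤ)) n.toNat = -jacobiSym n d := by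
        rw [hJfact hn hnodd, ZMod.χ₄_nat_three_mod_four (by omega), neg_one_mul]
      rw [hval, hJ]
      push_cast
      rw [Complex.I_sq]
      ring
  -- case (ii)
  · intro hm4 hn
    have hnodd : n % 2 = 1 := by
      rcases Int.emod_two_eq n with h | h
      · exact absurd ⟨by omega, h⟩ hpar
      · exact h
    rcases (by omega : n % 4 = 1 ∨ n % 4 = 3) with hn4 | hn4
    · obtain ⟨m₁, hm₁⟩ : ∃ m₁, m = 4 * m₁ + 2 := ⟨m / 4, by omega⟩
      obtain ⟨n₁, hn₁⟩ : ∃ n₁, n = 4 * n₁ + 1 := ⟨n / 4, by omega⟩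
      have cm : (m : 𝓞 K) = 4 * (m₁ : 𝓞 K) + 2 := by rw [hm₁]; push_cast; ring
      have cn : (n : 𝓞 K) = 4 * (n₁ : 𝓞 K) + 1 := by rw [hn₁]; push_cast; ring
      have hmem : (m : 𝓞 K) * w + (n : 𝓞 K) - w ^ 2 ∈ p2 ^ 3 := by
        have hEq : (m : 𝓞 K) * w + (n : 𝓞 K) - w ^ 2 =
            4 * ((m₁ : 𝓞 K) * w + ((n₁ : 𝓞 K) + (e : 𝓞 K))) + ((2 : 𝓞 K) + 2 * w) := by
          linear_combination w * cm + cn + hd' - hw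
        rw [hEq]; exact Ideal.add_mem _ (hmem4 _) h2w
      have hval := hε u _ 2 n hu hmem hspanw
      have hJ : jacobiSym (-(D : ℤ)) n.toNat = jacobiSym n d := by
        rw [hJfact hn hnodd, ZMod.χ₄_nat_one_mod_four (by omega), one_mul]
      rw [hval, hJ]
      push_cast
      rw [Complex.I_sq]
      ring
    · obtain ⟨m₁, hm₁⟩ : ∃ m₁, m = 4 * m₁ + 2 := ⟨m / 4, by omega⟩
      obtain ⟨n₁, hn₁⟩ : ∃ n₁, n = 4 * n₁ + 3 := ⟨n / 4, by omega⟩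
      have cm : (m : 𝓞 K) = 4 * (m₁ : 𝓞 K) + 2 := by rw [hm₁]; push_cast; ring
      have cn : (n : 𝓞 K) = 4 * (n₁ : 𝓞 K) + 3 := by rw [hn₁]; push_cast; ring
      have hmem : (m : 𝓞 K) * w + (n : 𝓞 K) - w ^ 0 ∈ p2 ^ 3 := by
        have hEq : (m : 𝓞 K) * w + (n : 𝓞 K) - w ^ 0 =
            4 * ((m₁ : 𝓞 K) * w + (n₁ : 𝓞 K)) + ((2 : 𝓞 K) + 2 * w) := by
          linear_combination w * cm + cn
        rw [hEq]; exact Ideal.add_mem _ (hmem4 _) h2w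
      have hval := hε u _ 0 n hu hmem hspanw
      have hJ : jacobiSym (-(D : ℤ)) n.toNat = -jacobiSym n d := by
        rw [hJfact hn hnodd, ZMod.χ₄_nat_three_mod_four (by omega), neg_one_mul]
      rw [hval, hJ]
      push_cast
      ring
  -- case (iii)
  · intro hn4 hm
    have hmodd : m % 2 = 1 := by
      rcases Int.emod_two_eq m with h | h
      · exact absurd ⟨h, by omega⟩ hpar
      · exact h
    rcases (by omega : m % 4 = 1 ∨ m % 4 = 3) with hm4 | hm4
    · obtain ⟨m₁, hm₁⟩ : ∃ m₁, m = 4 * m₁ + 1 := ⟨m / 4, by omega⟩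
      obtain ⟨n₁, hn₁⟩ : ∃ n₁, n = 4 * n₁ := ⟨n / 4, by omega⟩
      have cm : (m : 𝓞 K) = 4 * (m₁ : 𝓞 K) + 1 := by rw [hm₁]; push_cast; ring
      have cn : (n : 𝓞 K) = 4 * (n₁ : 𝓞 K) := by rw [hn₁]; push_cast; ring
      have hmem : (m : 𝓞 K) * w + (n : 𝓞 K) - w ^ 1 ∈ p2 ^ 3 := by
        have hEq : (m : 𝓞 K) * w + (n : 𝓞 K) - w ^ 1 =
            4 * ((m₁ : 𝓞 K) * w + (n₁ : 𝓞 K)) := by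
          linear_combination w * cm + cn
        rw [hEq]; exact hmem4 _
      have hval := hε u _ 1 n hu hmem hspanw
      rw [hval, hpow1 ((m - 1) / 2) (by omega)]
      ring
    · obtain ⟨m₁, hm₁⟩ : ∃ m₁, m = 4 * m₁ + 3 := ⟨m / 4, by omega⟩
      obtain ⟨n₁, hn₁⟩ : ∃ n₁, n = 4 * n₁ := ⟨n / 4, by omega⟩
      have cm : (m : 𝓞 K) = 4 * (m₁ : 𝓞 K) + 3 := by rw [hm₁]; push_cast; ring
      have cn : (n : 𝓞 K) = 4 * (n₁ : 𝓞 K) := by rw [hn₁]; push_cast; ring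
      have hmem : (m : 𝓞 K) * w + (n : 𝓞 K) - w ^ 3 ∈ p2 ^ 3 := by
        have hEq : (m : 𝓞 K) * w + (n : 𝓞 K) - w ^ 3 =
            4 * (((m₁ : 𝓞 K) + (e : 𝓞 K) + 1) * w + (n₁ : 𝓞 K)) := by
          linear_combination w * cm + cn + w * hd' - w * hw
        rw [hEq]; exact hmem4 _
      have hval := hε u _ 3 n hu hmem hspanw
      rw [hval, hpow2 ((m - 1) / 2) (by omega), hI3]
      ring
  -- case (iv)
  · intro hn4 hm
    have hmodd : m % 2 = 1 := by
      rcases Int.emod_two_eq m with h | h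
      · exact absurd ⟨h, by omega⟩ hpar
      · exact h
    rcases (by omega : m % 4 = 1 ∨ m % 4 = 3) with hm4 | hm4
    · obtain ⟨m₁, hm₁⟩ : ∃ m₁, m = 4 * m₁ + 1 := ⟨m / 4, by omega⟩
      obtain ⟨n₁, hn₁⟩ : ∃ n₁, n = 4 * n₁ + 2 := ⟨n / 4, by omega⟩
      have cm : (m : 𝓞 K) = 4 * (m₁ : 𝓞 K) + 1 := by rw [hm₁]; push_cast; ring
      have cn : (n : 𝓞 K) = 4 * (n₁ : 𝓞 K) + 2 := by rw [hn₁]; push_cast; ring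
      have hmem : (m : 𝓞 K) * w + (n : 𝓞 K) - w ^ 3 ∈ p2 ^ 3 := by
        have hEq : (m : 𝓞 K) * w + (n : 𝓞 K) - w ^ 3 =
            4 * (((m₁ : 𝓞 K) + (e : 𝓞 K)) * w + (n₁ : 𝓞 K)) + ((2 : 𝓞 K) + 2 * w) := by
          linear_combination w * cm + cn + w * hd' - w * hw
        rw [hEq]; exact Ideal.add_mem _ (hmem4 _) h2w
      have hval := hε u _ 3 n hu hmem hspanw
      rw [hval, hpow1 ((m - 1) / 2) (by omega), hI3]
      ring
    · obtain ⟨m₁, hm₁⟩ : ∃ m₁, m = 4 * m₁ + 3 := ⟨m / 4, by omega⟩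
      obtain ⟨n₁, hn₁⟩ : ∃ n₁, n = 4 * n₁ + 2 := ⟨n / 4, by omega⟩
      have cm : (m : 𝓞 K) = 4 * (m₁ : 𝓞 K) + 3 := by rw [hm₁]; push_cast; ring
      have cn : (n : 𝓞 K) = 4 * (n₁ : 𝓞 K) + 2 := by rw [hn₁]; push_cast; ring
      have hmem : (m : 𝓞 K) * w + (n : 𝓞 K) - w ^ 1 ∈ p2 ^ 3 := by
        have hEq : (m : 𝓞 K) * w + (n : 𝓞 K) - w ^ 1 =
            4 * ((m₁ : 𝓞 K) * w + (n₁ : 𝓞 K)) + ((2 : 𝓞 K) + 2 * w) := by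
          linear_combination w * cm + cn
        rw [hEq]; exact Ideal.add_mem _ (hmem4 _) h2w
      have hval := hε u _ 1 n hu hmem hspanw
      rw [hval, hpow2 ((m - 1) / 2) (by omega)]
      ring
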